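/- The candidate efficient influence function (4) for cATE(k) has mean zero (property underlying Theorem 3, equation (4)): define ψ := Σ_{(w,e): 𝒫(W=w,E=e,V=1)>0} (μ_oc(1,w,e) − μ_oc(0,w,e)) · p(w,e|V=1) and the random variable φ := (1{V=1}/𝒫(V=1)) · [ (2A−1)/(A·π(W,E) + (1−A)·(1−π(W,E))) · (Y − μ_oc(A,W,E)) + μ_oc(1,W,E) − μ_oc(0,W,E) − ψ ], where all bracketed terms are set to 0 on the event {V=0}. Then 𝔼[φ] = 0. -/

import Mathlib

open MeasureTheory Finset

/-- Conditional expectation given an event: `𝔼[X | B] := 𝔼[X · 1_B] / 𝒫(B)`. -/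
noncomputable def condMean {Ω : Type*} [MeasurableSpace Ω] (P : Measure Ω)
    (X : Ω → ℝ) (B : Set Ω) : ℝ :=
  (∫ ω, B.indicator X ω ∂P) / (P B).toReal

/-- The candidate efficient influence function (4) for `cATE(k)` has mean zero
(property underlying Theorem 3, equation (4)): with
`ψ := Σ_{(w,e) : 𝒫(W=w,E=e,V=1)>0} (μ_oc(1,w,e) − μ_oc(0,w,e)) · p(w,e|V=1)` and
`φ := (1{V=1}/𝒫(V=1)) · [ (2A−1)/(A·π(W,E) + (1−A)·(1−π(W,E))) · (Y − μ_oc(A,W,E))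
  + μ_oc(1,W,E) − μ_oc(0,W,E) − ψ ]` (bracketed terms set to `0` on `{V=0}`),
one has `𝔼[φ] = 0`. -/
theorem eif_only_concurrent_mean_zero
    {Ω : Type*} [MeasurableSpace Ω] (P : Measure Ω) [IsProbabilityMeasure P]
    {𝓦 ℰ : Type*} [Fintype 𝓦] [Fintype ℰ] [Nonempty 𝓦] [Nonempty ℰ]
    [MeasurableSpace 𝓦] [MeasurableSingletonClass 𝓦]
    [MeasurableSpace ℰ] [MeasurableSingletonClass ℰ]
    (W : Ω → 𝓦) (E : Ω → ℰ) (V : Ω → Fin 2) (A : Ω → Fin 2) (Y : Ω → ℝ)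
    (hW : Measurable W) (hE : Measurable E) (hV : Measurable V) (hA : Measurable A)
    (hY : Integrable Y P)
    (hV1 : 0 < P {ω | V ω = 1})
    -- positivity of both arms among concurrent units
    (hpos1 : ∀ (w : 𝓦) (e : ℰ), 0 < P {ω | W ω = w ∧ E ω = e ∧ V ω = 1} →
      0 < P {ω | A ω = 1 ∧ W ω = w ∧ E ω = e ∧ V ω = 1})
    (hpos0 : ∀ (w : 𝓦) (e : ℰ), 0 < P {ω | W ω = w ∧ E ω = e ∧ V ω = 1} →
      0 < P {ω | A ω = 0 ∧ W ω = w ∧ E ω = e ∧ V ω = 1})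
    -- by design, treatment is only assigned when available
    (hdesign : P {ω | A ω = 1 ∧ V ω = 0} = 0)
    -- the outcome regression among concurrent units
    (μoc : Fin 2 → 𝓦 → ℰ → ℝ)
    (hμoc : ∀ (a : Fin 2) (w : 𝓦) (e : ℰ), μoc a w e =
      condMean P Y {ω | A ω = a ∧ W ω = w ∧ E ω = e ∧ V ω = 1})
    -- the propensity score among concurrent units
    (π : 𝓦 → ℰ → ℝ)
    (hπ : ∀ (w : 𝓦) (e : ℰ), π w e =
      (P {ω | A ω = 1 ∧ W ω = w ∧ E ω = e ∧ V ω = 1}).toReal /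
        (P {ω | W ω = w ∧ E ω = e ∧ V ω = 1}).toReal)
    -- the estimand ψ = cATE
    (ψ : ℝ)
    (hψ : ψ = ∑ w : 𝓦, ∑ e : ℰ,
      if 0 < P {ω | W ω = w ∧ E ω = e ∧ V ω = 1} then
        (μoc 1 w e - μoc 0 w e) *
          ((P {ω | W ω = w ∧ E ω = e ∧ V ω = 1}).toReal / (P {ω | V ω = 1}).toReal)
      else 0)
    -- the candidate efficient influence function (4)
    (φ : Ω → ℝ)
    (hφ : ∀ ω, φ ω =
      if V ω = 1 then
        (1 / (P {ω' | V ω' = 1}).toReal) *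
          ((2 * ((A ω : ℕ) : ℝ) - 1) /
              (((A ω : ℕ) : ℝ) * π (W ω) (E ω) +
                (1 - ((A ω : ℕ) : ℝ)) * (1 - π (W ω) (E ω))) *
              (Y ω - μoc (A ω) (W ω) (E ω)) +
            μoc 1 (W ω) (E ω) - μoc 0 (W ω) (E ω) - ψ)
      else 0) :
    ∫ ω, φ ω ∂P = 0 := by
  classical
  set PV : ℝ := (P {ω | V ω = 1}).toReal with hPVdef
  have hPVpos : 0 < PV := ENNReal.toReal_pos hV1.ne' (measure_ne_top P _)
  set s : Fin 2 → 𝓦 → ℰ → Set Ω :=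
    fun a w e => {ω | A ω = a ∧ W ω = w ∧ E ω = e ∧ V ω = 1} with hsdef
  set t : 𝓦 → ℰ → Set Ω := fun w e => {ω | W ω = w ∧ E ω = e ∧ V ω = 1} with htdef
  have hs_eq : ∀ (a : Fin 2) (w : 𝓦) (e : ℰ),
      {ω | A ω = a ∧ W ω = w ∧ E ω = e ∧ V ω = 1} = s a w e := fun _ _ _ => rfl
  have ht_eq : ∀ (w : 𝓦) (e : ℰ),
      {ω | W ω = w ∧ E ω = e ∧ V ω = 1} = t w e := fun _ _ => rfl
  simp only [hs_eq] at hμoc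
  simp only [ht_eq] at hψ
  have hsmeas : ∀ a w e, MeasurableSet (s a w e) := by
    intro a w e
    have : s a w e = A ⁻¹' {a} ∩ (W ⁻¹' {w} ∩ (E ⁻¹' {e} ∩ V ⁻¹' {1})) := by
      ext ω; simp [hsdef, and_assoc]
    rw [this]
    exact (hA (measurableSet_singleton a)).inter
      ((hW (measurableSet_singleton w)).inter
        ((hE (measurableSet_singleton e)).inter (hV (measurableSet_singleton 1))))
  set F : Fin 2 → 𝓦 → ℰ → Ω → ℝ := fun a w e ω =>
    (1 / PV) * ((2 * ((a : ℕ) : ℝ) - 1) /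
        (((a : ℕ) : ℝ) * π w e + (1 - ((a : ℕ) : ℝ)) * (1 - π w e)) *
        (Y ω - μoc a w e) + μoc 1 w e - μoc 0 w e - ψ) with hFdef
  -- pointwise decomposition of φ
  have hφsum : ∀ ω, φ ω =
      ∑ a : Fin 2, ∑ w : 𝓦, ∑ e : ℰ, (s a w e).indicator (F a w e) ω := by
    intro ω
    by_cases hv : V ω = 1
    · have collapse : (∑ a : Fin 2, ∑ w : 𝓦, ∑ e : ℰ, (s a w e).indicator (F a w e) ω)
          = F (A ω) (W ω) (E ω) ω := by
        rw [Finset.sum_eq_single_of_mem (A ω) (Finset.mem_univ _)]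
        · rw [Finset.sum_eq_single_of_mem (W ω) (Finset.mem_univ _)]
          · rw [Finset.sum_eq_single_of_mem (E ω) (Finset.mem_univ _)]
            · exact Set.indicator_of_mem (show ω ∈ s (A ω) (W ω) (E ω) from ⟨rfl, rfl, rfl, hv⟩) _
            · intro e _ he
              exact Set.indicator_of_notMem (fun h => he h.2.2.1.symm) _
          · intro w _ hw
            exact Finset.sum_eq_zero fun e _ =>
              Set.indicator_of_notMem (fun h => hw h.2.1.symm) _
        · intro a _ ha
          exact Finset.sum_eq_zero fun w _ => Finset.sum_eq_zero fun e _ =>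
            Set.indicator_of_notMem (fun h => ha h.1.symm) _
      rw [collapse, hφ ω, if_pos hv]
    · rw [hφ ω, if_neg hv]
      symm
      exact Finset.sum_eq_zero fun a _ => Finset.sum_eq_zero fun w _ =>
        Finset.sum_eq_zero fun e _ =>
          Set.indicator_of_notMem (fun h => hv h.2.2.2) _
  -- integrability
  have hFint : ∀ a w e, Integrable ((s a w e).indicator (F a w e)) P := by
    intro a w e
    refine Integrable.indicator ?_ (hsmeas a w e)
    exact (((((hY.sub (integrable_const _)).const_mul _).add
      (integrable_const _)).sub (integrable_const _)).sub (integrable_const _)).const_mul _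
  -- conditional expectation property
  have hYs : ∀ a w e, ∫ ω in s a w e, Y ω ∂P = μoc a w e * (P (s a w e)).toReal := by
    intro a w e
    rcases eq_or_ne (P (s a w e)) 0 with h0 | h0
    · rw [h0, Measure.restrict_eq_zero.mpr h0]
      simp
    · have hm := hμoc a w e
      rw [condMean, integral_indicator (hsmeas a w e)] at hm
      rw [hm, div_mul_cancel₀]
      exact ENNReal.toReal_ne_zero.mpr ⟨h0, measure_ne_top _ _⟩
  -- per-atom integral
  have hatom : ∀ a w e, ∫ ω, (s a w e).indicator (F a w e) ω ∂P
      = (1 / PV) * (μoc 1 w e - μoc 0 w e - ψ) * (P (s a w e)).toReal := by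
    intro a w e
    rw [integral_indicator (hsmeas a w e)]
    set k : ℝ := (2 * ((a : ℕ) : ℝ) - 1) /
        (((a : ℕ) : ℝ) * π w e + (1 - ((a : ℕ) : ℝ)) * (1 - π w e)) with hkdef
    have hFeq : F a w e = fun ω => ((1 / PV) * k) * Y ω +
        ((1 / PV) * (μoc 1 w e - μoc 0 w e - ψ - k * μoc a w e)) := by
      funext ω; simp only [hFdef]; ring
    rw [hFeq, integral_add ((hY.restrict (s := s a w e)).const_mul _) (integrable_const _),
      integral_const_mul, setIntegral_const, measureReal_def, hYs a w e, smul_eq_mul]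
    ring
  -- measure bookkeeping
  have hPs : ∀ w e, (P (s 0 w e)).toReal + (P (s 1 w e)).toReal = (P (t w e)).toReal := by
    intro w e
    rw [← ENNReal.toReal_add (measure_ne_top _ _) (measure_ne_top _ _)]
    congr 1
    have hdisj : Disjoint (s 0 w e) (s 1 w e) := by
      refine Set.disjoint_left.mpr fun ω h0 h1 => ?_
      have := h0.1; rw [h1.1] at this; exact absurd this (by decide)
    have huni : s 0 w e ∪ s 1 w e = t w e := by
      ext ω
      simp only [hsdef, htdef, Set.mem_union, Set.mem_setOf_eq]
      constructor
      · rintro (⟨_, h⟩ | ⟨_, h⟩) <;> exact h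
      · intro h
        have : A ω = 0 ∨ A ω = 1 := by
          have : ∀ x : Fin 2, x = 0 ∨ x = 1 := by decide
          exact this (A ω)
        rcases this with h' | h'
        · exact Or.inl ⟨h', h⟩
        · exact Or.inr ⟨h', h⟩
    rw [← huni, measure_union hdisj (hsmeas 1 w e)]
  have hsumT : (∑ w : 𝓦, ∑ e : ℰ, (P (t w e)).toReal) = PV := by
    have key : (∑ p : 𝓦 × ℰ, P (t p.1 p.2)) = P {ω | V ω = 1} := by
      have h1 : ∀ p : 𝓦 × ℰ,
          P (t p.1 p.2) = (P.restrict {ω | V ω = 1}) ((fun ω => (W ω, E ω)) ⁻¹' {p}) := by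
        intro p
        rw [Measure.restrict_apply ((hW.prodMk hE) (measurableSet_singleton p))]
        congr 1
        ext ω
        simp [htdef, Prod.ext_iff, and_assoc]
      simp only [h1]
      rw [sum_measure_preimage_singleton _
        (fun y _ => (hW.prodMk hE) (measurableSet_singleton y))]
      have : ((Finset.univ : Finset (𝓦 × ℰ)) : Set (𝓦 × ℰ)) = Set.univ := by simp
      rw [this, Set.preimage_univ, Measure.restrict_apply_univ]
    rw [hPVdef, ← key, ENNReal.toReal_sum (fun p _ => measure_ne_top _ _),
      Fintype.sum_prod_type]
  -- ψ without the indicator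
  have hψ' : ψ = ∑ w : 𝓦, ∑ e : ℰ,
      (μoc 1 w e - μoc 0 w e) * ((P (t w e)).toReal / PV) := by
    rw [hψ]
    refine Finset.sum_congr rfl fun w _ => Finset.sum_congr rfl fun e _ => ?_
    split_ifs with h
    · rfl
    · have h0 : P (t w e) = 0 := by
        by_contra hne
        exact h (pos_iff_ne_zero.mpr hne)
      rw [h0]; simp
  -- put everything together
  have main : ∫ ω, φ ω ∂P =
      ∑ w : 𝓦, ∑ e : ℰ, (1 / PV) * (μoc 1 w e - μoc 0 w e - ψ) * (P (t w e)).toReal := by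
    have h1 : ∫ ω, φ ω ∂P =
        ∑ a : Fin 2, ∑ w : 𝓦, ∑ e : ℰ, ∫ ω, (s a w e).indicator (F a w e) ω ∂P := by
      simp only [hφsum]
      rw [integral_finset_sum _ (fun a _ =>
        integrable_finset_sum _ (fun w _ => integrable_finset_sum _ fun e _ => hFint a w e))]
      refine Finset.sum_congr rfl fun a _ => ?_
      rw [integral_finset_sum _ (fun w _ => integrable_finset_sum _ fun e _ => hFint a w e)]
      refine Finset.sum_congr rfl fun w _ => ?_
      rw [integral_finset_sum _ (fun e _ => hFint a w e)]
    rw [h1]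
    simp only [hatom]
    rw [Fin.sum_univ_two, ← Finset.sum_add_distrib]
    refine Finset.sum_congr rfl fun w _ => ?_
    rw [← Finset.sum_add_distrib]
    refine Finset.sum_congr rfl fun e _ => ?_
    rw [← mul_add, hPs w e]
  rw [main]
  have expand : ∀ w e, (1 / PV) * (μoc 1 w e - μoc 0 w e - ψ) * (P (t w e)).toReal
      = (μoc 1 w e - μoc 0 w e) * ((P (t w e)).toReal / PV)
        - ψ * ((1 / PV) * (P (t w e)).toReal) := by
    intro w e; ring
  simp only [expand]
  rw [Finset.sum_congr rfl (fun w _ => Finset.sum_sub_distrib _ _), Finset.sum_sub_distrib]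
  have left : (∑ w : 𝓦, ∑ e : ℰ, (μoc 1 w e - μoc 0 w e) * ((P (t w e)).toReal / PV)) = ψ :=
    hψ'.symm
  have right : (∑ w : 𝓦, ∑ e : ℰ, ψ * ((1 / PV) * (P (t w e)).toReal)) = ψ := by
    have : ∀ w e, ψ * ((1 / PV) * (P (t w e)).toReal)
        = (ψ / PV) * (P (t w e)).toReal := by intro w e; ring
    simp only [this, ← Finset.mul_sum]
    rw [hsumT, div_mul_cancel₀ _ hPVpos.ne']
  rw [left, right, sub_self]
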